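/- arXiv:2207.13844 — 2 statements merged into one kernel-verified Lean document; each statement's English description precedes it below -/
import Mathlib

section
/- Let γ : [0,1] → 𝕊² be C² with |γ'| = 1 and κ(θ) = ⟨γ''(θ),(γ×γ')(θ)⟩ bounded between positive constants. Let K ≥ 1, δ > 0 small, and let θ, θ+Δ ∈ [0,1] with CKδ ≤ Δ for a sufficiently large constant C (depending on γ and K) and Δ ≤ C⁻¹. Then for any a with K⁻¹ ≤ |a| ≤ 1 and any b with |b| ≤ 1, one has |⟨γ(θ+Δ), a γ'(θ) + b (γ×γ')(θ)⟩| ≥ 10δ. -/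
noncomputable section
open Set MeasureTheory
open scoped ENNReal

abbrev E3 := EuclideanSpace ℝ (Fin 3)

/-- Cross product on `ℝ³`. -/
def cross3 (a b : E3) : E3 :=
  (EuclideanSpace.equiv (Fin 3) ℝ).symm
    ![a 1 * b 2 - a 2 * b 1, a 2 * b 0 - a 0 * b 2, a 0 * b 1 - a 1 * b 0]

/-- Determinant of the 3×3 matrix with columns `a, b, c`. -/
def det3 (a b c : E3) : ℝ :=
  Matrix.det !![a 0, b 0, c 0; a 1, b 1, c 1; a 2, b 2, c 2]

lemma inner3 (x y : E3) : (inner ℝ x y : ℝ) = x 0 * y 0 + x 1 * y 1 + x 2 * y 2 := by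
  simp [PiLp.inner_apply, Fin.sum_univ_three, RCLike.inner_apply, mul_comm]

lemma inner_self_cross3 (a b : E3) : (inner ℝ a (cross3 a b) : ℝ) = 0 := by
  rw [inner3]; show a 0 * (a 1 * b 2 - a 2 * b 1) + a 1 * (a 2 * b 0 - a 0 * b 2)
    + a 2 * (a 0 * b 1 - a 1 * b 0) = 0; ring

lemma inner_right_cross3 (a b : E3) : (inner ℝ b (cross3 a b) : ℝ) = 0 := by
  rw [inner3]; show b 0 * (a 1 * b 2 - a 2 * b 1) + b 1 * (a 2 * b 0 - a 0 * b 2)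
    + b 2 * (a 0 * b 1 - a 1 * b 0) = 0; ring

lemma cross3_norm_le (a b : E3) : ‖cross3 a b‖ ≤ ‖a‖ * ‖b‖ := by
  have h : ‖cross3 a b‖^2 ≤ (‖a‖ * ‖b‖)^2 := by
    rw [← real_inner_self_eq_norm_sq, mul_pow, ← real_inner_self_eq_norm_sq,
      ← real_inner_self_eq_norm_sq, inner3, inner3, inner3]
    show (a 1 * b 2 - a 2 * b 1) * (a 1 * b 2 - a 2 * b 1)
      + (a 2 * b 0 - a 0 * b 2) * (a 2 * b 0 - a 0 * b 2)
      + (a 0 * b 1 - a 1 * b 0) * (a 0 * b 1 - a 1 * b 0) ≤ _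
    nlinarith [sq_nonneg (a 0 * b 0 + a 1 * b 1 + a 2 * b 2)]
  nlinarith [norm_nonneg (cross3 a b), norm_nonneg a, norm_nonneg b,
    mul_nonneg (norm_nonneg a) (norm_nonneg b)]

set_option maxHeartbeats 1000000 in
theorem high_part_transversality
    (γ : ℝ → E3) (hγ : ContDiff ℝ 2 γ)
    (hsphere : ∀ θ ∈ Icc (0:ℝ) 1, ‖γ θ‖ = 1)
    (hunit : ∀ θ ∈ Icc (0:ℝ) 1, ‖deriv γ θ‖ = 1)
    (c c' : ℝ) (hc : 0 < c)
    (hκ : ∀ θ ∈ Icc (0:ℝ) 1,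
      c ≤ (inner ℝ (deriv (deriv γ) θ) (cross3 (γ θ) (deriv γ θ)) : ℝ) ∧
      (inner ℝ (deriv (deriv γ) θ) (cross3 (γ θ) (deriv γ θ)) : ℝ) ≤ c')
    (K : ℝ) (hK : 1 ≤ K) :
    ∃ C : ℝ, 0 < C ∧ ∀ δ : ℝ, 0 < δ → ∀ θ Δ : ℝ,
      θ ∈ Icc (0:ℝ) 1 → θ + Δ ∈ Icc (0:ℝ) 1 →
      C * K * δ ≤ Δ → Δ ≤ C⁻¹ →
      ∀ a b : ℝ, K⁻¹ ≤ |a| → |a| ≤ 1 → |b| ≤ 1 →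
        10 * δ ≤ |(inner ℝ (γ (θ + Δ)) (a • deriv γ θ + b • cross3 (γ θ) (deriv γ θ)) : ℝ)| := by
  have hK0 : (0:ℝ) < K := lt_of_lt_of_le one_pos hK
  -- smoothness data
  have h21 : (2 : WithTop ℕ∞) = 1 + 1 := by norm_num
  rw [h21] at hγ
  obtain ⟨hd1, -, hcd1⟩ := contDiff_succ_iff_deriv.mp hγ
  obtain ⟨hd2, hcont2⟩ := contDiff_one_iff_deriv.mp hcd1
  -- bound on second derivative
  obtain ⟨M0, hM0⟩ := (isCompact_Icc (a := (0:ℝ)) (b := 1)).exists_bound_of_continuousOn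
    hcont2.continuousOn
  obtain ⟨M, hM1, hM0'⟩ : ∃ M : ℝ, 1 ≤ M ∧ ∀ s ∈ Icc (0:ℝ) 1, ‖deriv (deriv γ) s‖ ≤ M :=
    ⟨max M0 1, le_max_right _ _, fun s hs => (hM0 s hs).trans (le_max_left _ _)⟩
  -- orthogonality of γ and γ' on [0,1]
  have horth : ∀ s ∈ Icc (0:ℝ) 1, (inner ℝ (γ s) (deriv γ s) : ℝ) = 0 := by
    have hIoo : ∀ s ∈ Ioo (0:ℝ) 1, (inner ℝ (γ s) (deriv γ s) : ℝ) = 0 := by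
      intro s hs
      have hds : HasDerivAt γ (deriv γ s) s := (hd1 s).hasDerivAt
      have h1 : HasDerivAt (fun t => (inner ℝ (γ t) (γ t) : ℝ))
          ((inner ℝ (γ s) (deriv γ s) : ℝ) + (inner ℝ (deriv γ s) (γ s) : ℝ)) s :=
        HasDerivAt.inner ℝ hds hds
      have h2 : HasDerivAt (fun t => (inner ℝ (γ t) (γ t) : ℝ)) 0 s := by
        refine (hasDerivAt_const s (1:ℝ)).congr_of_eventuallyEq ?_
        filter_upwards [Ioo_mem_nhds hs.1 hs.2] with x hx
        have := hsphere x (Ioo_subset_Icc_self hx)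
        rw [real_inner_self_eq_norm_sq, this]; norm_num
      have huniq := h1.unique h2
      have hsym : (inner ℝ (γ s) (deriv γ s) : ℝ) = (inner ℝ (deriv γ s) (γ s) : ℝ) :=
        real_inner_comm _ _
      linarith
    intro s hs
    have hcl : s ∈ closure (Ioo (0:ℝ) 1) := by
      rw [closure_Ioo (by norm_num : (0:ℝ) ≠ 1)]; exact hs
    have hcont : Continuous (fun t => (inner ℝ (γ t) (deriv γ t) : ℝ)) :=
      hd1.continuous.inner hd2.continuous
    have hclosed : IsClosed {t : ℝ | (inner ℝ (γ t) (deriv γ t) : ℝ) = 0} :=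
      isClosed_eq hcont continuous_const
    exact (closure_minimal (fun t ht => hIoo t ht) hclosed) hcl
  -- the constant
  refine ⟨100 * K * M, by positivity, ?_⟩
  intro δ hδ θ Δ hθ hθΔ hlo hhi a b hKa ha1 hb1
  have hθ0 : (0:ℝ) ≤ θ := hθ.1
  have hΔpos : 0 < Δ := lt_of_lt_of_le (by positivity) hlo
  have hmem : ∀ t ∈ Icc (0:ℝ) Δ, θ + t ∈ Icc (0:ℝ) 1 := by
    intro t ht
    exact ⟨by linarith [ht.1], by linarith [ht.2, hθΔ.2]⟩
  set w : E3 := a • deriv γ θ + b • cross3 (γ θ) (deriv γ θ) with hw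
  have hTn : ‖deriv γ θ‖ = 1 := hunit θ hθ
  have hNn : ‖cross3 (γ θ) (deriv γ θ)‖ ≤ 1 := by
    have := cross3_norm_le (γ θ) (deriv γ θ)
    rw [hsphere θ hθ, hTn] at this; simpa using this
  have hwn : ‖w‖ ≤ 2 := by
    rw [hw]
    calc ‖a • deriv γ θ + b • cross3 (γ θ) (deriv γ θ)‖
        ≤ ‖a • deriv γ θ‖ + ‖b • cross3 (γ θ) (deriv γ θ)‖ := norm_add_le _ _
      _ = |a| * ‖deriv γ θ‖ + |b| * ‖cross3 (γ θ) (deriv γ θ)‖ := by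
          rw [norm_smul, norm_smul, Real.norm_eq_abs, Real.norm_eq_abs]
      _ ≤ 2 := by
          rw [hTn]
          nlinarith [abs_nonneg a, abs_nonneg b, norm_nonneg (cross3 (γ θ) (deriv γ θ))]
  -- derivative computations
  have hshift : ∀ t : ℝ, HasDerivAt (fun u : ℝ => θ + u) 1 t := fun t => by
    simpa using (hasDerivAt_id t).const_add θ
  have hF' : ∀ t : ℝ, HasDerivAt (fun u => (inner ℝ (γ (θ + u)) w : ℝ))
      ((inner ℝ (deriv γ (θ + t)) w : ℝ)) t := by
    intro t
    have h3 : HasDerivAt (fun u => γ (θ + u)) (deriv γ (θ + t)) t := by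
      simpa [Function.comp_def] using ((hd1 (θ + t)).hasDerivAt).scomp t (hshift t)
    have := HasDerivAt.inner ℝ h3 (hasDerivAt_const t w)
    simpa using this
  have hF'' : ∀ t : ℝ, HasDerivAt (fun u => (inner ℝ (deriv γ (θ + u)) w : ℝ))
      ((inner ℝ (deriv (deriv γ) (θ + t)) w : ℝ)) t := by
    intro t
    have h3 : HasDerivAt (fun u => deriv γ (θ + u)) (deriv (deriv γ) (θ + t)) t := by
      simpa [Function.comp_def] using ((hd2 (θ + t)).hasDerivAt).scomp t (hshift t)
    have := HasDerivAt.inner ℝ h3 (hasDerivAt_const t w)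
    simpa using this
  -- value of F' at 0
  have hF'0 : (inner ℝ (deriv γ (θ + 0)) w : ℝ) = a := by
    rw [add_zero, hw, inner_add_right, real_inner_smul_right, real_inner_smul_right,
      inner_right_cross3, real_inner_self_eq_norm_sq, hTn]
    ring
  -- value of F at 0
  have hF0 : (inner ℝ (γ (θ + 0)) w : ℝ) = 0 := by
    rw [add_zero, hw, inner_add_right, real_inner_smul_right, real_inner_smul_right,
      inner_self_cross3, horth θ hθ]
    ring
  -- Step A : |F' t - a| ≤ 2 M Δ on [0, Δ]
  have stepA : ∀ t ∈ Icc (0:ℝ) Δ, |(inner ℝ (deriv γ (θ + t)) w : ℝ) - a| ≤ 2 * M * Δ := by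
    intro t ht
    have hmvt := (convex_Icc (0:ℝ) Δ).norm_image_sub_le_of_norm_hasDerivWithin_le
      (f := fun u => (inner ℝ (deriv γ (θ + u)) w : ℝ))
      (f' := fun u => (inner ℝ (deriv (deriv γ) (θ + u)) w : ℝ)) (C := 2 * M)
      (fun u _ => (hF'' u).hasDerivWithinAt)
      (fun u hu => by
        have h1 : |(inner ℝ (deriv (deriv γ) (θ + u)) w : ℝ)| ≤ ‖deriv (deriv γ) (θ + u)‖ * ‖w‖ :=
          abs_real_inner_le_norm _ _
        have h2 := hM0' (θ + u) (hmem u hu)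
        have h3 : ‖deriv (deriv γ) (θ + u)‖ * ‖w‖ ≤ M * 2 :=
          mul_le_mul h2 hwn (norm_nonneg _) (le_trans zero_le_one hM1)
        calc ‖(inner ℝ (deriv (deriv γ) (θ + u)) w : ℝ)‖
            ≤ ‖deriv (deriv γ) (θ + u)‖ * ‖w‖ := h1
          _ ≤ M * 2 := h3
          _ = 2 * M := by ring)
      (left_mem_Icc.mpr hΔpos.le) ht
    have h0n : ‖t - (0:ℝ)‖ ≤ Δ := by
      rw [sub_zero, Real.norm_eq_abs, abs_of_nonneg ht.1]; exact ht.2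
    calc |(inner ℝ (deriv γ (θ + t)) w : ℝ) - a|
        = ‖(inner ℝ (deriv γ (θ + t)) w : ℝ) - (inner ℝ (deriv γ (θ + 0)) w : ℝ)‖ := by
          rw [Real.norm_eq_abs, hF'0]
      _ ≤ 2 * M * ‖t - (0:ℝ)‖ := by simpa using hmvt
      _ ≤ 2 * M * Δ := by
          have h2M : (0:ℝ) ≤ 2 * M := by linarith
          exact mul_le_mul_of_nonneg_left h0n h2M
  -- Step B : |F Δ - a Δ| ≤ 2 M Δ²
  have stepB : |(inner ℝ (γ (θ + Δ)) w : ℝ) - a * Δ| ≤ 2 * M * Δ ^ 2 := by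
    have hmvt := (convex_Icc (0:ℝ) Δ).norm_image_sub_le_of_norm_hasDerivWithin_le
      (f := fun u => (inner ℝ (γ (θ + u)) w : ℝ) - a * u)
      (f' := fun u => (inner ℝ (deriv γ (θ + u)) w : ℝ) - a) (C := 2 * M * Δ)
      (fun u _ => by
        simpa [Pi.sub_def] using ((hF' u).sub ((hasDerivAt_id u).const_mul a)).hasDerivWithinAt)
      (fun u hu => stepA u hu)
      (left_mem_Icc.mpr hΔpos.le) (right_mem_Icc.mpr hΔpos.le)
    have h0n : ‖Δ - (0:ℝ)‖ = Δ := by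
      rw [sub_zero, Real.norm_eq_abs, abs_of_pos hΔpos]
    calc |(inner ℝ (γ (θ + Δ)) w : ℝ) - a * Δ|
        = ‖((inner ℝ (γ (θ + Δ)) w : ℝ) - a * Δ) - ((inner ℝ (γ (θ + 0)) w : ℝ) - a * 0)‖ := by
          rw [Real.norm_eq_abs, hF0]; ring_nf
      _ ≤ 2 * M * Δ * ‖Δ - (0:ℝ)‖ := by simpa using hmvt
      _ = 2 * M * Δ ^ 2 := by rw [h0n]; ring
  -- lower bound on |F Δ|
  have hlow : |a| * Δ - 2 * M * Δ ^ 2 ≤ |(inner ℝ (γ (θ + Δ)) w : ℝ)| := by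
    have h1 : |a * Δ| - |(inner ℝ (γ (θ + Δ)) w : ℝ)| ≤ |a * Δ - (inner ℝ (γ (θ + Δ)) w : ℝ)| :=
      abs_sub_abs_le_abs_sub _ _
    rw [abs_sub_comm, abs_mul, abs_of_pos hΔpos] at h1
    linarith [stepB]
  -- arithmetic
  have hCpos : (0:ℝ) < 100 * K * M := by positivity
  have e1 : 1 ≤ K * |a| := by
    have := mul_le_mul_of_nonneg_left hKa hK0.le
    rwa [mul_inv_cancel₀ hK0.ne'] at this
  have e2 : 100 * K * M * Δ ≤ 1 := by
    calc 100 * K * M * Δ ≤ 100 * K * M * (100 * K * M)⁻¹ := by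
          exact mul_le_mul_of_nonneg_left hhi hCpos.le
      _ = 1 := mul_inv_cancel₀ hCpos.ne'
  have e3 : 100 * K * M * K * δ ≤ Δ := hlo
  have hKM : 1 ≤ K * M := by nlinarith
  have h5 : 100 * K * M * Δ * Δ ≤ Δ := by
    have := mul_le_mul_of_nonneg_right e2 hΔpos.le
    linarith
  have h6 : Δ ≤ K * |a| * Δ := by
    have := mul_le_mul_of_nonneg_right e1 hΔpos.le
    linarith
  have h5' : 100 * K * M * Δ ^ 2 ≤ Δ := by nlinarith [h5]
  have e4 : 1 * (K * δ) ≤ K * M * (K * δ) :=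
    mul_le_mul_of_nonneg_right hKM (mul_pos hK0 hδ).le
  have h7 : 10 * K * δ + 2 * K * M * Δ ^ 2 ≤ Δ := by linarith only [e4, e3, h5', hΔpos.le]
  have h8 : K * (10 * δ) ≤ K * (|a| * Δ - 2 * M * Δ ^ 2) := by linarith only [h6, h7]
  have h9 : 10 * δ ≤ |a| * Δ - 2 * M * Δ ^ 2 := (mul_le_mul_iff_of_pos_left hK0).mp h8
  exact h9.trans hlow
end
end

section
/- Let B ⊂ ℝⁿ be bounded with s-dimensional Hausdorff content ℋ^s_∞(B) = κ > 0, and let δ > 0. Then there exists a δ-separated subset P ⊆ B of cardinality ≳ κ δ^{-s} that is a (δ,s)-set: for every ball B_r of radius r with δ ≤ r ≤ 1, the maximal number of δ-separated points of P ∩ B_r is ≲ (r/δ)^s. -/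
noncomputable section
open Set MeasureTheory Metric
open scoped ENNReal

/-- The `s`-dimensional Hausdorff content of a set. -/
def hausdorffContent {X : Type*} [EMetricSpace X] (s : ℝ) (B : Set X) : ℝ≥0∞ :=
  ⨅ (t : ℕ → Set X) (_ : B ⊆ ⋃ i, t i), ∑' i, EMetric.diam (t i) ^ s

open scoped NNReal Classical
set_option maxHeartbeats 1600000

variable {X : Type*} [EMetricSpace X] {s : ℝ}

lemma hc_le_of_cover {A : Set X} (t : ℕ → Set X) (h : A ⊆ ⋃ i, t i) :
    hausdorffContent s A ≤ ∑' i, EMetric.diam (t i) ^ s := iInf₂_le t h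

lemma hc_mono {A A' : Set X} (h : A ⊆ A') :
    hausdorffContent s A ≤ hausdorffContent s A' :=
  le_iInf₂ fun t ht => hc_le_of_cover t (h.trans ht)

lemma hc_le_diam (hs : 0 < s) (A : Set X) :
    hausdorffContent s A ≤ EMetric.diam A ^ s := by
  refine (hc_le_of_cover (fun i => if i = 0 then A else ∅) ?_).trans ?_
  · intro x hx; exact mem_iUnion.2 ⟨0, by simpa using hx⟩
  · rw [tsum_eq_single 0 (fun b hb => by
      simp [hb, EMetric.diam, ENNReal.zero_rpow_of_pos hs])]
    simp

lemma hc_union2 (hs : 0 < s) (A C : Set X) :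
    hausdorffContent s (A ∪ C) ≤ hausdorffContent s A + hausdorffContent s C := by
  refine ENNReal.le_of_forall_pos_le_add fun (ε : NNReal) hε hfin => ?_
  have hA : hausdorffContent s A ≠ ⊤ := fun h => by simp [h] at hfin
  have hC : hausdorffContent s C ≠ ⊤ := fun h => by simp [h] at hfin
  have hε2 : ((ε/2 : ℝ≥0) : ℝ≥0∞) ≠ 0 := by
    simpa using (div_pos hε (by norm_num : (0:ℝ≥0) < 2)).ne'
  have h1 : hausdorffContent s A < hausdorffContent s A + (ε/2 : ℝ≥0) :=
    ENNReal.lt_add_right hA hε2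
  have h2 : hausdorffContent s C < hausdorffContent s C + (ε/2 : ℝ≥0) :=
    ENNReal.lt_add_right hC hε2
  rw [hausdorffContent, iInf_lt_iff] at h1 h2
  obtain ⟨t1, h1⟩ := h1
  obtain ⟨t2, h2⟩ := h2
  rw [iInf_lt_iff] at h1 h2
  obtain ⟨ht1, h1⟩ := h1
  obtain ⟨ht2, h2⟩ := h2
  set u : ℕ → Set X := fun i => if Even i then t1 (i / 2) else t2 (i / 2) with hu
  have hue : ∀ k, u (2 * k) = t1 k := fun k => by
    simp [hu, Nat.mul_div_cancel_left _ (by norm_num : 0 < 2)]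
  have huo : ∀ k, u (2 * k + 1) = t2 k := fun k => by
    have : ¬ Even (2 * k + 1) := by simp [Nat.even_add_one, parity_simps]
    simp [hu, this, Nat.mul_add_div (by norm_num : 0 < 2)]
  have hcov : A ∪ C ⊆ ⋃ i, u i := by
    rintro x (hx | hx)
    · obtain ⟨j, hj⟩ := mem_iUnion.1 (ht1 hx)
      exact mem_iUnion.2 ⟨2 * j, by rw [hue]; exact hj⟩
    · obtain ⟨j, hj⟩ := mem_iUnion.1 (ht2 hx)
      exact mem_iUnion.2 ⟨2 * j + 1, by rw [huo]; exact hj⟩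
  refine (hc_le_of_cover u hcov).trans ?_
  have := tsum_even_add_odd (f := fun i => EMetric.diam (u i) ^ s)
    ENNReal.summable ENNReal.summable
  rw [← this]
  have e1 : ∑' k, EMetric.diam (u (2 * k)) ^ s = ∑' k, EMetric.diam (t1 k) ^ s := by
    congr 1; ext k; rw [hue]
  have e2 : ∑' k, EMetric.diam (u (2 * k + 1)) ^ s = ∑' k, EMetric.diam (t2 k) ^ s := by
    congr 1; ext k; rw [huo]
  rw [e1, e2]
  calc ∑' k, EMetric.diam (t1 k) ^ s + ∑' k, EMetric.diam (t2 k) ^ s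
      ≤ (hausdorffContent s A + (ε/2:ℝ≥0)) + (hausdorffContent s C + (ε/2:ℝ≥0)) :=
        add_le_add h1.le h2.le
    _ = hausdorffContent s A + hausdorffContent s C + ((ε/2:ℝ≥0) + (ε/2:ℝ≥0)) := by ring
    _ ≤ hausdorffContent s A + hausdorffContent s C + ε := by
        gcongr
        rw [← ENNReal.coe_add]
        exact ENNReal.coe_le_coe.2 (le_of_eq (add_halves ε))

lemma hc_biUnion {ι : Type*} (hs : 0 < s) (F : Finset ι) (f : ι → Set X) :
    hausdorffContent s (⋃ i ∈ F, f i) ≤ ∑ i ∈ F, hausdorffContent s (f i) := by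
  classical
  induction F using Finset.induction_on with
  | empty =>
    have he : (⋃ i ∈ (∅ : Finset ι), f i) = (∅ : Set X) := by simp
    rw [he, Finset.sum_empty]
    refine (hc_le_diam hs (∅ : Set X)).trans ?_
    simp [EMetric.diam, ENNReal.zero_rpow_of_pos hs]
  | insert _ _ hnotmem ih =>
    rename_i a F'
    rw [Finset.set_biUnion_insert, Finset.sum_insert hnotmem]
    exact (hc_union2 hs _ _).trans (add_le_add le_rfl ih)

variable {n : ℕ}

def cube (j : ℕ) (k : Fin n → ℤ) : Set (EuclideanSpace ℝ (Fin n)) :=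
  {x | ∀ i, (k i : ℝ) ≤ x i * 2 ^ j ∧ x i * 2 ^ j < (k i : ℝ) + 1}

def child (k : Fin n → ℤ) (b : Fin n → Bool) : Fin n → ℤ :=
  fun i => 2 * k i + (if b i then 1 else 0)

lemma cube_disj {j : ℕ} {k k' : Fin n → ℤ} {x : EuclideanSpace ℝ (Fin n)}
    (h : x ∈ cube j k) (h' : x ∈ cube j k') : k = k' := by
  funext i
  obtain ⟨h1, h2⟩ := h i
  obtain ⟨h3, h4⟩ := h' i
  have e1 : (k i : ℝ) < (k' i : ℝ) + 1 := lt_of_le_of_lt h1 h4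
  have e2 : (k' i : ℝ) < (k i : ℝ) + 1 := lt_of_le_of_lt h3 h2
  have e1' : k i < k' i + 1 := by exact_mod_cast e1
  have e2' : k' i < k i + 1 := by exact_mod_cast e2
  omega

lemma child_subset {j : ℕ} {k : Fin n → ℤ} (b : Fin n → Bool) :
    cube (j + 1) (child k b) ⊆ cube j k := by
  intro x hx i
  obtain ⟨h1, h2⟩ := hx i
  simp only [child] at h1 h2
  have e : x i * 2 ^ (j + 1) = x i * 2 ^ j * 2 := by ring
  rw [e] at h1 h2
  push_cast at h1 h2
  constructor
  · by_cases hb : b i <;> simp [hb] at h1 h2 <;> linarith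
  · by_cases hb : b i <;> simp [hb] at h1 h2 <;> linarith

lemma cube_cover {j : ℕ} {k : Fin n → ℤ} {x : EuclideanSpace ℝ (Fin n)}
    (h : x ∈ cube j k) : ∃ b : Fin n → Bool, x ∈ cube (j + 1) (child k b) := by
  classical
  refine ⟨fun i => decide ((2 * (k i : ℝ) + 1) ≤ x i * 2 ^ (j + 1)), fun i => ?_⟩
  obtain ⟨h1, h2⟩ := h i
  have e : x i * 2 ^ (j + 1) = x i * 2 ^ j * 2 := by ring
  simp only [child, decide_eq_true_eq]
  push_cast
  split_ifs with hb
  · rw [e] at hb ⊢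
    constructor <;> linarith
  · rw [e] at hb ⊢
    push_neg at hb
    constructor <;> linarith

lemma cube_nest {j j' : ℕ} (hj : j ≤ j') {a k' : Fin n → ℤ}
    {x y : EuclideanSpace ℝ (Fin n)} (hx' : x ∈ cube j' k') (hxa : x ∈ cube j a)
    (hy : y ∈ cube j' k') : y ∈ cube j a := by
  intro i
  obtain ⟨hx1, hx2⟩ := hx' i
  obtain ⟨ha1, ha2⟩ := hxa i
  obtain ⟨hy1, hy2⟩ := hy i
  set d := j' - j with hd
  have hpow : (2:ℝ) ^ j' = 2 ^ j * 2 ^ d := by rw [← pow_add]; congr 1; omega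
  have hc : (0:ℝ) < 2 ^ d := by positivity
  have key : ∀ z : EuclideanSpace ℝ (Fin n), z i * 2 ^ j' = z i * 2 ^ j * 2 ^ d := by
    intro z; rw [hpow]; ring
  have h1 : (a i : ℝ) * 2 ^ d ≤ (k' i : ℝ) := by
    have t1 : (a i : ℝ) * 2 ^ d ≤ x i * 2 ^ j * 2 ^ d :=
      mul_le_mul_of_nonneg_right ha1 hc.le
    have t2 : (a i : ℝ) * 2 ^ d < (k' i : ℝ) + 1 := by
      rw [← key x] at t1; linarith
    have t3 : a i * (2 ^ d : ℤ) < k' i + 1 := by exact_mod_cast t2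
    have t4 : a i * (2 ^ d : ℤ) ≤ k' i := by omega
    exact_mod_cast t4
  have h2 : (k' i : ℝ) + 1 ≤ ((a i : ℝ) + 1) * 2 ^ d := by
    have t1 : x i * 2 ^ j * 2 ^ d < ((a i : ℝ) + 1) * 2 ^ d :=
      mul_lt_mul_of_pos_right ha2 hc
    have t2 : (k' i : ℝ) < ((a i : ℝ) + 1) * 2 ^ d := by
      rw [← key x] at t1; linarith
    have t3 : k' i < (a i + 1) * 2 ^ d := by exact_mod_cast t2
    have t4 : k' i + 1 ≤ (a i + 1) * (2 ^ d : ℤ) := by omega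
    exact_mod_cast t4
  constructor
  · have : (a i : ℝ) * 2 ^ d ≤ y i * 2 ^ j * 2 ^ d := by rw [← key y]; linarith
    exact le_of_mul_le_mul_right this hc
  · have : y i * 2 ^ j * 2 ^ d < ((a i : ℝ) + 1) * 2 ^ d := by rw [← key y]; linarith
    exact lt_of_mul_lt_mul_right this hc.le

lemma mem_cube_floor (j : ℕ) (x : EuclideanSpace ℝ (Fin n)) :
    x ∈ cube j (fun i => ⌊x i * 2 ^ j⌋) := fun i =>
  ⟨Int.floor_le _, Int.lt_floor_add_one _⟩

lemma coord_le_dist (x y : EuclideanSpace ℝ (Fin n)) (i : Fin n) :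
    |x i - y i| ≤ dist x y := by
  rw [EuclideanSpace.dist_eq, ← Real.sqrt_sq_eq_abs]
  apply Real.sqrt_le_sqrt
  have e : (x i - y i) ^ 2 = dist (x i) (y i) ^ 2 := by
    rw [Real.dist_eq, sq_abs]
  rw [e]
  exact Finset.single_le_sum (f := fun i => dist (x i) (y i) ^ 2)
    (fun i _ => sq_nonneg _) (Finset.mem_univ i)

lemma dist_le_of_mem_cube {j : ℕ} {k : Fin n → ℤ} {x y : EuclideanSpace ℝ (Fin n)}
    (hx : x ∈ cube j k) (hy : y ∈ cube j k) :
    dist x y ≤ ((n : ℝ) + 1) * ((2 : ℝ) ^ j)⁻¹ := by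
  have hc : (0:ℝ) < 2 ^ j := by positivity
  have hco : ∀ i, dist (x i) (y i) ≤ ((2:ℝ) ^ j)⁻¹ := by
    intro i
    obtain ⟨hx1, hx2⟩ := hx i
    obtain ⟨hy1, hy2⟩ := hy i
    rw [Real.dist_eq, abs_sub_le_iff]
    constructor <;> nlinarith [inv_mul_cancel₀ hc.ne', hc, hx1, hx2, hy1, hy2]
  rw [EuclideanSpace.dist_eq]
  have hsum : ∑ i, dist (x i) (y i) ^ 2 ≤ (((n:ℝ) + 1) * ((2:ℝ) ^ j)⁻¹) ^ 2 := by
    calc ∑ i, dist (x i) (y i) ^ 2 ≤ ∑ _i : Fin n, (((2:ℝ) ^ j)⁻¹) ^ 2 := by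
          refine Finset.sum_le_sum fun i _ => ?_
          have := hco i
          nlinarith [dist_nonneg (x := x i) (y := y i)]
      _ = (n : ℝ) * (((2:ℝ) ^ j)⁻¹) ^ 2 := by
          rw [Finset.sum_const]; simp [mul_comm]
      _ ≤ (((n:ℝ) + 1) * ((2:ℝ) ^ j)⁻¹) ^ 2 := by
          have h0 : (0:ℝ) ≤ ((2:ℝ) ^ j)⁻¹ := by positivity
          nlinarith [sq_nonneg (((2:ℝ)^j)⁻¹), Nat.cast_nonneg (α := ℝ) n]
  calc Real.sqrt (∑ i, dist (x i) (y i) ^ 2)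
      ≤ Real.sqrt ((((n:ℝ) + 1) * ((2:ℝ) ^ j)⁻¹) ^ 2) := Real.sqrt_le_sqrt hsum
    _ = ((n:ℝ) + 1) * ((2:ℝ) ^ j)⁻¹ := Real.sqrt_sq (by positivity)

lemma diam_cube_le (j : ℕ) (k : Fin n → ℤ) {A : Set (EuclideanSpace ℝ (Fin n))}
    (hA : A ⊆ cube j k) :
    EMetric.diam A ≤ ENNReal.ofReal (((n : ℝ) + 1) * ((2 : ℝ) ^ j)⁻¹) := by
  refine EMetric.diam_le fun x hx y hy => ?_
  rw [edist_dist]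
  exact ENNReal.ofReal_le_ofReal (dist_le_of_mem_cube (hA hx) (hA hy))

section Weights

def W (B : Set (EuclideanSpace ℝ (Fin n))) (s : ℝ) (m : ℕ) :
    ℕ → (Fin n → ℤ) → ℝ
  | 0, k => if (B ∩ cube m k).Nonempty then ((2:ℝ) ^ m)⁻¹ ^ s else 0
  | (t+1), k => min (((2:ℝ) ^ (t+1) * ((2:ℝ) ^ m)⁻¹) ^ s)
      (∑ b : Fin n → Bool, W B s m t (child k b))

variable {B : Set (EuclideanSpace ℝ (Fin n))} {s : ℝ} {m : ℕ}

lemma W_zero (k : Fin n → ℤ) :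
    W B s m 0 k = if (B ∩ cube m k).Nonempty then ((2:ℝ) ^ m)⁻¹ ^ s else 0 := by
  simp [W]

lemma W_succ (t : ℕ) (k : Fin n → ℤ) :
    W B s m (t+1) k = min (((2:ℝ) ^ (t+1) * ((2:ℝ) ^ m)⁻¹) ^ s)
      (∑ b : Fin n → Bool, W B s m t (child k b)) := by
  simp [W]

lemma W_nonneg (hs : 0 < s) : ∀ t k, 0 ≤ W B s m t k
  | 0, k => by
    rw [W_zero]; split_ifs
    · positivity
    · exact le_refl _
  | (t+1), k => by
    rw [W_succ]
    exact le_min (by positivity) (Finset.sum_nonneg fun b _ => W_nonneg hs t _)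

lemma W_le (hs : 0 < s) : ∀ t k, W B s m t k ≤ ((2:ℝ) ^ t * ((2:ℝ) ^ m)⁻¹) ^ s
  | 0, k => by
    rw [W_zero]; split_ifs
    · simp
    · positivity
  | (t+1), k => by rw [W_succ]; exact min_le_left _ _

lemma content_le (hs : 0 < s) : ∀ t, t ≤ m → ∀ k,
    hausdorffContent s (B ∩ cube (m - t) k) ≤
      ENNReal.ofReal (((n:ℝ) + 1) ^ s) * ENNReal.ofReal (W B s m t k) := by
  intro t
  induction t with
  | zero =>
    intro _ k
    rw [Nat.sub_zero]
    by_cases h : (B ∩ cube m k).Nonempty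
    · have hd := diam_cube_le m k (inter_subset_right (s := B))
      calc hausdorffContent s (B ∩ cube m k) ≤ EMetric.diam (B ∩ cube m k) ^ s :=
            hc_le_diam hs _
        _ ≤ ENNReal.ofReal (((n:ℝ) + 1) * ((2:ℝ) ^ m)⁻¹) ^ s :=
            ENNReal.rpow_le_rpow hd hs.le
        _ = ENNReal.ofReal ((((n:ℝ) + 1) * ((2:ℝ) ^ m)⁻¹) ^ s) := by
            rw [← ENNReal.ofReal_rpow_of_nonneg (by positivity) hs.le]
        _ = ENNReal.ofReal (((n:ℝ) + 1) ^ s * (((2:ℝ) ^ m)⁻¹) ^ s) := by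
            rw [Real.mul_rpow (by positivity) (by positivity)]
        _ = ENNReal.ofReal (((n:ℝ) + 1) ^ s) * ENNReal.ofReal (W B s m 0 k) := by
            rw [W_zero, if_pos h, ENNReal.ofReal_mul (by positivity)]
    · rw [Set.not_nonempty_iff_eq_empty.mp h]
      refine le_trans (hc_le_diam hs _) ?_
      simp [EMetric.diam, ENNReal.zero_rpow_of_pos hs]
  | succ t ih =>
    intro ht k
    have ht' : t ≤ m := by omega
    have harith : m - (t+1) + 1 = m - t := by omega
    set Cn := ENNReal.ofReal (((n:ℝ) + 1) ^ s) with hCn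
    have h2 : hausdorffContent s (B ∩ cube (m - (t+1)) k) ≤
        Cn * ENNReal.ofReal (∑ b : Fin n → Bool, W B s m t (child k b)) := by
      have hcov : B ∩ cube (m - (t+1)) k ⊆
          ⋃ b ∈ (Finset.univ : Finset (Fin n → Bool)), (B ∩ cube (m - t) (child k b)) := by
        rintro x ⟨hxB, hxc⟩
        obtain ⟨b, hb⟩ := cube_cover hxc
        rw [harith] at hb
        exact Set.mem_biUnion (Finset.mem_univ b) ⟨hxB, hb⟩
      calc hausdorffContent s (B ∩ cube (m - (t+1)) k)
          ≤ hausdorffContent s (⋃ b ∈ (Finset.univ : Finset (Fin n → Bool)),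
              (B ∩ cube (m - t) (child k b))) := hc_mono hcov
        _ ≤ ∑ b : Fin n → Bool, hausdorffContent s (B ∩ cube (m - t) (child k b)) :=
            hc_biUnion hs _ _
        _ ≤ ∑ b : Fin n → Bool, Cn * ENNReal.ofReal (W B s m t (child k b)) :=
            Finset.sum_le_sum fun b _ => ih ht' (child k b)
        _ = Cn * ENNReal.ofReal (∑ b : Fin n → Bool, W B s m t (child k b)) := by
            rw [← Finset.mul_sum, ENNReal.ofReal_sum_of_nonneg
              (fun b _ => W_nonneg hs t _)]
    have hinv : ((2:ℝ) ^ (m - (t+1)))⁻¹ = 2 ^ (t+1) * ((2:ℝ) ^ m)⁻¹ := by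
      have h2m : (2:ℝ) ^ m = 2 ^ (m - (t+1)) * 2 ^ (t+1) := by
        rw [← pow_add]; congr 1; omega
      rw [h2m]
      field_simp
    have h1 : hausdorffContent s (B ∩ cube (m - (t+1)) k) ≤
        Cn * ENNReal.ofReal (((2:ℝ) ^ (t+1) * ((2:ℝ) ^ m)⁻¹) ^ s) := by
      have hd := diam_cube_le (m - (t+1)) k (inter_subset_right (s := B))
      calc hausdorffContent s (B ∩ cube (m - (t+1)) k)
          ≤ EMetric.diam (B ∩ cube (m - (t+1)) k) ^ s := hc_le_diam hs _
        _ ≤ ENNReal.ofReal (((n:ℝ) + 1) * ((2:ℝ) ^ (m - (t+1)))⁻¹) ^ s :=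
            ENNReal.rpow_le_rpow hd hs.le
        _ = ENNReal.ofReal ((((n:ℝ) + 1) * ((2:ℝ) ^ (m - (t+1)))⁻¹) ^ s) := by
            rw [← ENNReal.ofReal_rpow_of_nonneg (by positivity) hs.le]
        _ = ENNReal.ofReal (((n:ℝ) + 1) ^ s * (((2:ℝ) ^ (m - (t+1)))⁻¹) ^ s) := by
            rw [Real.mul_rpow (by positivity) (by positivity)]
        _ = Cn * ENNReal.ofReal (((2:ℝ) ^ (t+1) * ((2:ℝ) ^ m)⁻¹) ^ s) := by
            rw [hinv, ENNReal.ofReal_mul (by positivity)]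
    rw [W_succ]
    rcases le_total (((2:ℝ) ^ (t+1) * ((2:ℝ) ^ m)⁻¹) ^ s)
      (∑ b : Fin n → Bool, W B s m t (child k b)) with h | h
    · rw [min_eq_left h]; exact h1
    · rw [min_eq_right h]; exact h2

end Weights

def cap (B : Set (EuclideanSpace ℝ (Fin n))) (s : ℝ) (m : ℕ) (t : ℕ) (k : Fin n → ℤ) : ℕ :=
  ⌈W B s m t k * ((2:ℝ) ^ m) ^ s⌉₊

variable {B : Set (EuclideanSpace ℝ (Fin n))} {s : ℝ} {m : ℕ}

lemma pow2m_rpow_pos : (0:ℝ) < ((2:ℝ) ^ m) ^ s := by positivity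

lemma cap_zero_le (hs : 0 < s) (k : Fin n → ℤ) : cap B s m 0 k ≤ 1 := by
  rw [cap, Nat.ceil_le, W_zero]
  split_ifs with h
  · rw [← Real.mul_rpow (by positivity) (by positivity),
      inv_mul_cancel₀ (by positivity : ((2:ℝ)^m) ≠ 0), Real.one_rpow]
    norm_num
  · simp

lemma cap_le (hs : 0 < s) (t : ℕ) (k : Fin n → ℤ) :
    (cap B s m t k : ℝ) ≤ ((2:ℝ) ^ t) ^ s + 1 := by
  have h1 : W B s m t k * ((2:ℝ) ^ m) ^ s ≤ ((2:ℝ) ^ t) ^ s := by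
    calc W B s m t k * ((2:ℝ) ^ m) ^ s
        ≤ ((2:ℝ) ^ t * ((2:ℝ) ^ m)⁻¹) ^ s * ((2:ℝ) ^ m) ^ s :=
          mul_le_mul_of_nonneg_right (W_le hs t k) pow2m_rpow_pos.le
      _ = (((2:ℝ) ^ t * ((2:ℝ) ^ m)⁻¹) * (2:ℝ) ^ m) ^ s := by
          rw [← Real.mul_rpow (by positivity) (by positivity)]
      _ = ((2:ℝ) ^ t) ^ s := by
          congr 1
          field_simp
  have h0 : 0 ≤ W B s m t k * ((2:ℝ) ^ m) ^ s :=
    mul_nonneg (W_nonneg hs t k) pow2m_rpow_pos.le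
  have := Nat.ceil_lt_add_one h0
  rw [cap]
  linarith

lemma cap_succ_le (hs : 0 < s) (t : ℕ) (k : Fin n → ℤ) :
    cap B s m (t+1) k ≤ ∑ b : Fin n → Bool, cap B s m t (child k b) := by
  rw [cap, Nat.ceil_le]
  push_cast
  calc W B s m (t+1) k * ((2:ℝ) ^ m) ^ s
      ≤ (∑ b : Fin n → Bool, W B s m t (child k b)) * ((2:ℝ) ^ m) ^ s := by
        apply mul_le_mul_of_nonneg_right _ pow2m_rpow_pos.le
        rw [W_succ]; exact min_le_right _ _
    _ = ∑ b : Fin n → Bool, W B s m t (child k b) * ((2:ℝ) ^ m) ^ s := by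
        rw [Finset.sum_mul]
    _ ≤ ∑ b : Fin n → Bool, ((cap B s m t (child k b) : ℕ) : ℝ) :=
        Finset.sum_le_sum fun b _ => Nat.le_ceil _
    _ = _ := by push_cast; ring

lemma nonempty_of_cap_pos (k : Fin n → ℤ) (h : 0 < cap B s m 0 k) :
    (B ∩ cube m k).Nonempty := by
  by_contra hcon
  rw [cap, W_zero, if_neg hcon] at h
  simp at h

lemma le_cap (t : ℕ) (k : Fin n → ℤ) :
    W B s m t k * ((2:ℝ) ^ m) ^ s ≤ cap B s m t k := Nat.le_ceil _

lemma exists_distrib {ι : Type*} [Fintype ι] (f : ι → ℕ) :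
    ∀ M, M ≤ ∑ i, f i → ∃ g : ι → ℕ, (∀ i, g i ≤ f i) ∧ ∑ i, g i = M
  | 0, _ => ⟨0, fun i => Nat.zero_le _, by simp⟩
  | (M+1), h => by
    obtain ⟨g, hg, hsum⟩ := exists_distrib f M (by omega)
    have hex : ∃ i, g i < f i := by
      by_contra hcon
      push_neg at hcon
      have : ∑ i, f i ≤ ∑ i, g i := Finset.sum_le_sum fun i _ => hcon i
      omega
    obtain ⟨i, hi⟩ := hex
    refine ⟨Function.update g i (g i + 1), fun j => ?_, ?_⟩
    · by_cases hj : j = i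
      · subst hj; rw [Function.update_self]; omega
      · rw [Function.update_of_ne hj]; exact hg j
    · rw [Finset.sum_update_of_mem (Finset.mem_univ i)]
      have e : ∑ j, g j = g i + ∑ j ∈ Finset.univ \ {i}, g j :=
        Finset.sum_eq_add_sum_sdiff_singleton_of_mem (Finset.mem_univ i) g
      omega

lemma child_inj {k : Fin n → ℤ} {b b' : Fin n → Bool} (h : child k b = child k b') :
    b = b' := by
  funext i
  have h2 := congrFun h i
  simp only [child, add_right_inj] at h2
  cases hb : b i <;> cases hb' : b' i <;>
    first
      | rfl
      | (exfalso; rw [hb, hb'] at h2; norm_num at h2)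

lemma select (hs : 0 < s) :
    ∀ t, t ≤ m → ∀ k M, M ≤ cap B s m t k →
    ∃ P : Finset (EuclideanSpace ℝ (Fin n)),
      (↑P ⊆ B ∩ cube (m - t) k) ∧ P.card = M ∧
      ∀ t', t' ≤ t → ∀ k',
        (P.filter (· ∈ cube (m - t') k')).card ≤ cap B s m t' k' := by
  intro t
  induction t with
  | zero =>
    intro _ k M hM
    have hM1 : M ≤ 1 := hM.trans (cap_zero_le hs k)
    by_cases hM0 : M = 0
    · subst hM0
      exact ⟨∅, by simp, by simp, fun t' ht' k' => by simp⟩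
    · have hMeq : M = 1 := by omega
      subst hMeq
      obtain ⟨x, hxB, hxc⟩ := nonempty_of_cap_pos (B := B) (s := s) (m := m) k (by omega)
      refine ⟨{x}, ?_, by simp, ?_⟩
      · intro a ha
        simp only [Finset.coe_singleton, Set.mem_singleton_iff] at ha
        subst ha
        rw [Nat.sub_zero]
        exact ⟨hxB, hxc⟩
      · intro t' ht' k'
        have ht0 : t' = 0 := by omega
        subst ht0
        rw [Nat.sub_zero]
        by_cases hxk : x ∈ cube m k'
        · have hkk : k' = k := cube_disj hxk hxc
          subst hkk
          exact (Finset.card_filter_le _ _).trans (by simpa using hM)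
        · rw [Finset.filter_singleton, if_neg hxk]
          simp
  | succ t ih =>
    intro ht k M hM
    have ht' : t ≤ m := by omega
    have harith : m - (t+1) + 1 = m - t := by omega
    have hM' : M ≤ ∑ b : Fin n → Bool, cap B s m t (child k b) :=
      hM.trans (cap_succ_le hs t k)
    obtain ⟨g, hg, hgsum⟩ := exists_distrib _ M hM'
    choose P hsub hcard hcount using fun b : Fin n → Bool =>
      ih ht' (child k b) (g b) (hg b)
    have hdisj : ∀ b ∈ (Finset.univ : Finset (Fin n → Bool)), ∀ b' ∈ Finset.univ,
        b ≠ b' → Disjoint (P b) (P b') := by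
      intro b _ b' _ hbb
      rw [Finset.disjoint_left]
      intro a ha ha'
      have h1 := (hsub b ha).2
      have h2 := (hsub b' ha').2
      exact hbb (child_inj (cube_disj h1 h2))
    refine ⟨Finset.univ.biUnion P, ?_, ?_, ?_⟩
    · intro a ha
      rw [Finset.mem_coe, Finset.mem_biUnion] at ha
      obtain ⟨b, -, hb⟩ := ha
      obtain hb' := hsub b hb
      refine ⟨hb'.1, ?_⟩
      have h2 := hb'.2
      rw [← harith] at h2
      exact child_subset b h2
    · rw [Finset.card_biUnion hdisj]
      simp only [hcard]
      exact hgsum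
    · intro t' ht'' k'
      by_cases hteq : t' = t + 1
      · subst hteq
        by_cases hk : k' = k
        · subst hk
          refine (Finset.card_filter_le _ _).trans ?_
          rw [Finset.card_biUnion hdisj]
          simp only [hcard]
          rw [hgsum]
          exact hM
        · have : ((Finset.univ.biUnion P).filter (· ∈ cube (m - (t+1)) k')) = ∅ := by
            rw [Finset.filter_eq_empty_iff]
            intro a ha hacube
            simp only [Finset.mem_biUnion, Finset.mem_univ, true_and] at ha
            obtain ⟨b, hb⟩ := ha
            have h2 := (hsub b hb).2
            rw [← harith] at h2
            exact hk (cube_disj hacube (child_subset b h2))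
          rw [this]
          simp
      · have ht3 : t' ≤ t := by omega
        rw [Finset.filter_biUnion]
        refine (Finset.card_biUnion_le).trans ?_
        by_cases hex : ∃ b0, ((P b0).filter (· ∈ cube (m - t') k')).Nonempty
        · obtain ⟨b0, a0, ha0⟩ := hex
          rw [Finset.mem_filter] at ha0
          obtain ⟨ha0P, ha0c⟩ := ha0
          have hkey : ∀ b, b ≠ b0 → ((P b).filter (· ∈ cube (m - t') k')) = ∅ := by
            intro b hb
            rw [Finset.filter_eq_empty_iff]
            intro a ha hacube
            have hnest : a ∈ cube (m - t) (child k b0) :=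
              cube_nest (by omega) ha0c (hsub b0 ha0P).2 hacube
            exact hb (child_inj (cube_disj (hsub b ha).2 hnest))
          rw [Finset.sum_eq_single b0 (fun b _ hb => by rw [hkey b hb]; simp)
            (fun h => absurd (Finset.mem_univ b0) h)]
          exact hcount b0 t' ht3 k'
        · push_neg at hex
          have : ∀ b : Fin n → Bool, ((P b).filter (· ∈ cube (m - t') k')).card = 0 := by
            intro b
            rw [Finset.card_eq_zero, ← Finset.not_nonempty_iff_eq_empty]
            exact Finset.not_nonempty_iff_eq_empty.2 (hex b)
          simp only [this, Finset.sum_const_zero]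
          exact Nat.zero_le _

theorem delta_separated_delta_s_subset (n : ℕ) (s : ℝ) (hs : 0 < s) :
    ∃ c C : ℝ, 0 < c ∧ 0 < C ∧
      ∀ B : Set (EuclideanSpace ℝ (Fin n)), Bornology.IsBounded B →
      ∀ κ : ℝ, 0 < κ → hausdorffContent s B = ENNReal.ofReal κ →
      ∀ δ : ℝ, 0 < δ → δ ≤ 1 →
        ∃ P : Finset (EuclideanSpace ℝ (Fin n)),
          (P : Set (EuclideanSpace ℝ (Fin n))) ⊆ B ∧
          (∀ x ∈ P, ∀ y ∈ P, x ≠ y → δ ≤ dist x y) ∧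
          c * κ * δ ^ (-s) ≤ (P.card : ℝ) ∧
          ∀ (x : EuclideanSpace ℝ (Fin n)) (r : ℝ), δ ≤ r → r ≤ 1 →
            (((P : Set (EuclideanSpace ℝ (Fin n))) ∩ closedBall x r).ncard : ℝ) ≤
              C * (r / δ) ^ s := by
  classical
  refine ⟨((((n:ℝ) + 1) ^ s) * 3 ^ n)⁻¹, (3:ℝ) ^ n * (2 * (4:ℝ) ^ s),
    by positivity, by positivity, ?_⟩
  intro B hB κ hκ hcont δ hδ hδ1
  -- Choice of the dyadic scale m with 2^{-m} ≤ δ < 2^{-m+1}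
  have hmex : ∃ m : ℕ, ((2:ℝ) ^ m)⁻¹ ≤ δ := by
    obtain ⟨m₀, hm₀⟩ : ∃ m : ℕ, δ⁻¹ < 2 ^ m := pow_unbounded_of_one_lt δ⁻¹ one_lt_two
    have h2 : (0:ℝ) < 2 ^ m₀ := by positivity
    refine ⟨m₀, ?_⟩
    have h1 : 1 < δ * 2 ^ m₀ := by
      calc (1:ℝ) = δ * δ⁻¹ := (mul_inv_cancel₀ hδ.ne').symm
        _ < δ * 2 ^ m₀ := by exact mul_lt_mul_of_pos_left hm₀ hδ
    nlinarith [inv_mul_cancel₀ h2.ne']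
  obtain ⟨m, hmle, hδlt⟩ : ∃ m : ℕ, ((2:ℝ) ^ m)⁻¹ ≤ δ ∧ δ < 2 * ((2:ℝ) ^ m)⁻¹ := by
    refine ⟨Nat.find hmex, Nat.find_spec hmex, ?_⟩
    rcases Nat.eq_zero_or_pos (Nat.find hmex) with h0 | hpos
    · rw [h0]; norm_num; linarith
    · have hmin := Nat.find_min hmex (show Nat.find hmex - 1 < Nat.find hmex by omega)
      push_neg at hmin
      have e : ((2:ℝ) ^ (Nat.find hmex - 1))⁻¹ = 2 * ((2:ℝ) ^ Nat.find hmex)⁻¹ := by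
        have e2 : (2:ℝ) ^ (Nat.find hmex - 1) * 2 = 2 ^ Nat.find hmex := by
          rw [← pow_succ]; congr 1; omega
        rw [← e2, mul_inv]; ring
      rw [← e]; exact hmin
  have h2m : (0:ℝ) < 2 ^ m := by positivity
  -- Finitely many unit cubes meet B
  have hSfin : {k : Fin n → ℤ | (B ∩ cube 0 k).Nonempty}.Finite := by
    obtain ⟨R, hR⟩ := (Metric.isBounded_iff_subset_closedBall 0).1 hB
    refine Set.Finite.subset (Set.Finite.pi
      (fun i : Fin n => Set.finite_Icc (-(⌈R⌉ + 1)) (⌈R⌉ + 1))) ?_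
    rintro k ⟨x, hxB, hxc⟩
    refine Set.mem_pi.2 fun i _ => ?_
    have h1 := coord_le_dist x 0 i
    have h0 : (0 : EuclideanSpace ℝ (Fin n)) i = 0 := rfl
    rw [h0, sub_zero] at h1
    have h2 : dist x 0 ≤ R := hR hxB
    have hxR : |x i| ≤ R := h1.trans h2
    obtain ⟨ha, hb⟩ := hxc i
    rw [pow_zero, mul_one] at ha hb
    obtain ⟨hc, hd⟩ := abs_le.1 hxR
    have hceil := Int.le_ceil R
    constructor
    · have : ((-(⌈R⌉ + 1) : ℤ) : ℝ) < (k i : ℝ) + 1 := by push_cast; linarith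
      have := (by exact_mod_cast this : (-(⌈R⌉ + 1) : ℤ) < k i + 1)
      omega
    · have : (k i : ℝ) ≤ ((⌈R⌉ + 1 : ℤ) : ℝ) := by push_cast; linarith
      exact_mod_cast this
  set S := hSfin.toFinset with hSdef
  -- The total-weight lower bound coming from the Hausdorff content
  set T := ∑ k ∈ S, W B s m m k with hTdef
  have hTnonneg : 0 ≤ T := Finset.sum_nonneg fun k _ => W_nonneg hs m k
  have hκT : κ ≤ ((n:ℝ) + 1) ^ s * T := by
    have hBcov : B ⊆ ⋃ k ∈ S, (B ∩ cube 0 k) := by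
      intro x hx
      have hmem := mem_cube_floor 0 x
      have hkS : (fun i => ⌊x i * 2 ^ 0⌋) ∈ S := by
        rw [hSdef, Set.Finite.mem_toFinset]
        exact ⟨x, hx, hmem⟩
      exact Set.mem_biUnion hkS ⟨hx, hmem⟩
    have h1 : ENNReal.ofReal κ ≤
        ENNReal.ofReal (((n:ℝ) + 1) ^ s) * ENNReal.ofReal T := by
      calc ENNReal.ofReal κ = hausdorffContent s B := hcont.symm
        _ ≤ hausdorffContent s (⋃ k ∈ S, (B ∩ cube 0 k)) := hc_mono hBcov
        _ ≤ ∑ k ∈ S, hausdorffContent s (B ∩ cube 0 k) := hc_biUnion hs _ _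
        _ ≤ ∑ k ∈ S, ENNReal.ofReal (((n:ℝ) + 1) ^ s) * ENNReal.ofReal (W B s m m k) := by
            refine Finset.sum_le_sum fun k _ => ?_
            have := content_le (B := B) hs m le_rfl k
            rw [Nat.sub_self] at this
            exact this
        _ = ENNReal.ofReal (((n:ℝ) + 1) ^ s) * ENNReal.ofReal T := by
            rw [← Finset.mul_sum, hTdef,
              ENNReal.ofReal_sum_of_nonneg (fun k _ => W_nonneg hs m k)]
    rw [← ENNReal.ofReal_mul (by positivity)] at h1
    exact (ENNReal.ofReal_le_ofReal_iff (by positivity)).1 h1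
  -- Select the points
  choose Pk hPk1 hPk2 hPk3 using fun k : Fin n → ℤ =>
    select (B := B) hs m le_rfl k (cap B s m m k) le_rfl
  set P0 := S.biUnion Pk with hP0def
  have hdisj : ∀ k ∈ S, ∀ k' ∈ S, k ≠ k' → Disjoint (Pk k) (Pk k') := by
    intro k _ k' _ hkk
    rw [Finset.disjoint_left]
    intro a ha ha'
    exact hkk (cube_disj (hPk1 k ha).2 (hPk1 k' ha').2)
  have hP0sub : ↑P0 ⊆ B := by
    intro a ha
    rw [hP0def, Finset.mem_coe, Finset.mem_biUnion] at ha
    obtain ⟨k, -, hk⟩ := ha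
    exact (hPk1 k hk).1
  have hP0card : ((2:ℝ) ^ m) ^ s * T ≤ P0.card := by
    rw [hP0def, Finset.card_biUnion hdisj]
    push_cast
    simp only [hPk2]
    rw [hTdef, Finset.mul_sum]
    refine Finset.sum_le_sum fun k _ => ?_
    rw [mul_comm]
    exact le_cap m k
  -- global counting bound for P0
  have hP0count : ∀ t', t' ≤ m → ∀ k',
      (P0.filter (· ∈ cube (m - t') k')).card ≤ cap B s m t' k' := by
    intro t' ht' k'
    rw [hP0def, Finset.filter_biUnion]
    refine Finset.card_biUnion_le.trans ?_
    by_cases hex : ∃ k0 ∈ S, ((Pk k0).filter (· ∈ cube (m - t') k')).Nonempty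
    · obtain ⟨k0, hk0S, a0, ha0⟩ := hex
      rw [Finset.mem_filter] at ha0
      obtain ⟨ha0P, ha0c⟩ := ha0
      have hkey : ∀ k ∈ S, k ≠ k0 → ((Pk k).filter (· ∈ cube (m - t') k')) = ∅ := by
        intro k _ hk
        rw [Finset.filter_eq_empty_iff]
        intro a ha hacube
        have hnest : a ∈ cube (m - m) k0 :=
          cube_nest (by omega) ha0c (hPk1 k0 ha0P).2 hacube
        exact hk (cube_disj (hPk1 k ha).2 hnest)
      rw [Finset.sum_eq_single k0 (fun k hk hkk => by rw [hkey k hk hkk]; simp)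
        (fun h => absurd hk0S h)]
      exact hPk3 k0 t' ht' k'
    · push_neg at hex
      refine le_trans (le_of_eq (Finset.sum_eq_zero fun k hk => ?_)) (Nat.zero_le _)
      rw [Finset.card_eq_zero, ← Finset.not_nonempty_iff_eq_empty]
      exact Finset.not_nonempty_iff_eq_empty.2 (hex k hk)
  -- pick the best congruence class mod 3
  set cls : EuclideanSpace ℝ (Fin n) → (Fin n → ZMod 3) :=
    fun x i => ((⌊x i * 2 ^ m⌋ : ℤ) : ZMod 3) with hclsdef
  have hsplit : ∑ σ : Fin n → ZMod 3, (P0.filter (fun x => cls x = σ)).card = P0.card :=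
    (Finset.card_eq_sum_card_fiberwise (fun x _ => Finset.mem_univ (cls x))).symm
  have hbest : ∃ σ : Fin n → ZMod 3,
      P0.card ≤ 3 ^ n * (P0.filter (fun x => cls x = σ)).card := by
    have hcard3 : Fintype.card (Fin n → ZMod 3) = 3 ^ n := by simp
    obtain ⟨σ, -, hσ⟩ := Finset.exists_le_of_sum_le (Finset.univ_nonempty)
      (show ∑ _σ : Fin n → ZMod 3, P0.card ≤
          ∑ σ : Fin n → ZMod 3, 3 ^ n * (P0.filter (fun x => cls x = σ)).card by
        rw [Finset.sum_const, ← Finset.mul_sum, hsplit, Finset.card_univ, hcard3]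
        simp [mul_comm])
    exact ⟨σ, hσ⟩
  obtain ⟨σ, hσ⟩ := hbest
  refine ⟨P0.filter (fun x => cls x = σ), ?_, ?_, ?_, ?_⟩
  · exact fun a ha => hP0sub (Finset.mem_coe.2 (Finset.mem_of_mem_filter a
      (Finset.mem_coe.1 ha)))
  · -- separation
    intro x hx y hy hxy
    obtain ⟨hxP0, hxσ⟩ := Finset.mem_filter.1 hx
    obtain ⟨hyP0, hyσ⟩ := Finset.mem_filter.1 hy
    set kx : Fin n → ℤ := fun i => ⌊x i * 2 ^ m⌋ with hkxdef
    set ky : Fin n → ℤ := fun i => ⌊y i * 2 ^ m⌋ with hkydef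
    have hxcube : x ∈ cube m kx := mem_cube_floor m x
    have hycube : y ∈ cube m ky := mem_cube_floor m y
    have hkxky : kx ≠ ky := by
      intro heq
      have hcount := hP0count 0 (Nat.zero_le m) kx
      rw [Nat.sub_zero] at hcount
      have hsub2 : ({x, y} : Finset (EuclideanSpace ℝ (Fin n))) ⊆
          P0.filter (· ∈ cube m kx) := by
        intro a ha
        rcases Finset.mem_insert.1 ha with rfl | ha
        · exact Finset.mem_filter.2 ⟨hxP0, hxcube⟩
        · rw [Finset.mem_singleton] at ha
          subst ha
          exact Finset.mem_filter.2 ⟨hyP0, heq ▸ hycube⟩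
      have h2le : 2 ≤ (P0.filter (· ∈ cube m kx)).card := by
        have hc := Finset.card_le_card hsub2
        rwa [Finset.card_insert_of_notMem (by simp [hxy]),
          Finset.card_singleton] at hc
      have hcap := cap_zero_le (B := B) (m := m) hs kx
      omega
    obtain ⟨i, hi⟩ := Function.ne_iff.1 hkxky
    have hmod : ((kx i : ZMod 3)) = ((ky i : ZMod 3)) := by
      have h1 : cls x i = cls y i := by rw [hxσ, hyσ]
      exact h1
    have hdvd : (3:ℤ) ∣ (ky i - kx i) :=
      Int.ModEq.dvd ((ZMod.intCast_eq_intCast_iff _ _ _).1 hmod)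
    have h3 : kx i + 3 ≤ ky i ∨ ky i + 3 ≤ kx i := by omega
    obtain ⟨hxc1, hxc2⟩ := hxcube i
    obtain ⟨hyc1, hyc2⟩ := hycube i
    have hge : 2 * ((2:ℝ) ^ m)⁻¹ ≤ |x i - y i| := by
      have hinv : ((2:ℝ) ^ m)⁻¹ * 2 ^ m = 1 := inv_mul_cancel₀ h2m.ne'
      rcases h3 with h | h
      · rw [le_abs]
        right
        have hcast : (kx i : ℝ) + 3 ≤ (ky i : ℝ) := by exact_mod_cast h
        have key : 2 ≤ (y i - x i) * 2 ^ m := by nlinarith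
        rw [show (2:ℝ) * ((2:ℝ) ^ m)⁻¹ = 2 / 2 ^ m by ring, neg_sub,
          div_le_iff₀ h2m]
        exact key
      · rw [le_abs]
        left
        have hcast : (ky i : ℝ) + 3 ≤ (kx i : ℝ) := by exact_mod_cast h
        have key : 2 ≤ (x i - y i) * 2 ^ m := by nlinarith
        rw [show (2:ℝ) * ((2:ℝ) ^ m)⁻¹ = 2 / 2 ^ m by ring, div_le_iff₀ h2m]
        exact key
    calc δ ≤ 2 * ((2:ℝ) ^ m)⁻¹ := hδlt.le
      _ ≤ |x i - y i| := hge
      _ ≤ dist x y := coord_le_dist x y i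
  · -- cardinality
    have hP0P : (P0.card : ℝ) ≤ 3 ^ n * ((P0.filter (fun x => cls x = σ)).card : ℝ) := by
      exact_mod_cast hσ
    have hd : δ⁻¹ ≤ (2:ℝ) ^ m := by
      have h := one_div_le_one_div_of_le (by positivity : (0:ℝ) < ((2:ℝ) ^ m)⁻¹) hmle
      rwa [one_div, one_div, inv_inv] at h
    have hpow : δ ^ (-s) ≤ ((2:ℝ) ^ m) ^ s := by
      calc δ ^ (-s) = (δ⁻¹) ^ s := by
            rw [Real.rpow_neg hδ.le, ← Real.inv_rpow hδ.le]
        _ ≤ ((2:ℝ) ^ m) ^ s := Real.rpow_le_rpow (by positivity) hd hs.le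
    rw [mul_assoc, inv_mul_le_iff₀ (by positivity)]
    have step1 : κ * δ ^ (-s) ≤ (((n:ℝ) + 1) ^ s * T) * ((2:ℝ) ^ m) ^ s :=
      mul_le_mul hκT hpow (Real.rpow_nonneg hδ.le _) (by nlinarith [Real.rpow_nonneg hδ.le (-s)])
    have step3 : ((n:ℝ) + 1) ^ s * (((2:ℝ) ^ m) ^ s * T) ≤ ((n:ℝ) + 1) ^ s * P0.card :=
      mul_le_mul_of_nonneg_left hP0card (by positivity)
    have step4 : ((n:ℝ) + 1) ^ s * (P0.card : ℝ) ≤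
        ((n:ℝ) + 1) ^ s * (3 ^ n * ((P0.filter (fun x => cls x = σ)).card : ℝ)) :=
      mul_le_mul_of_nonneg_left hP0P (by positivity)
    calc κ * δ ^ (-s) ≤ (((n:ℝ) + 1) ^ s * T) * ((2:ℝ) ^ m) ^ s := step1
      _ = ((n:ℝ) + 1) ^ s * (((2:ℝ) ^ m) ^ s * T) := by ring
      _ ≤ ((n:ℝ) + 1) ^ s * P0.card := step3
      _ ≤ ((n:ℝ) + 1) ^ s * (3 ^ n * ((P0.filter (fun x => cls x = σ)).card : ℝ)) := step4
      _ = ((n:ℝ) + 1) ^ s * 3 ^ n * ((P0.filter (fun x => cls x = σ)).card : ℝ) := by ring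
  · -- ball counting bound
    intro x r hδr hr1
    have hrpos : 0 < r := lt_of_lt_of_le hδ hδr
    have hjex : ∃ j : ℕ, ((2:ℝ) ^ (j + 1))⁻¹ < r := by
      obtain ⟨j₀, hj₀⟩ : ∃ j : ℕ, r⁻¹ < 2 ^ j := pow_unbounded_of_one_lt r⁻¹ one_lt_two
      have h2j : (0:ℝ) < 2 ^ (j₀ + 1) := by positivity
      refine ⟨j₀, ?_⟩
      have h1 : 1 < r * 2 ^ (j₀ + 1) := by
        have : (1:ℝ) = r * r⁻¹ := (mul_inv_cancel₀ hrpos.ne').symm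
        rw [this]
        have h2 : (2:ℝ) ^ j₀ < 2 ^ (j₀ + 1) := by
          rw [pow_succ]
          nlinarith [pow_pos (by norm_num : (0:ℝ) < 2) j₀]
        exact mul_lt_mul_of_pos_left (hj₀.trans h2) hrpos
      nlinarith [inv_mul_cancel₀ h2j.ne']
    obtain ⟨j, hj1, hj2⟩ : ∃ j : ℕ, ((2:ℝ) ^ (j + 1))⁻¹ < r ∧ r ≤ ((2:ℝ) ^ j)⁻¹ := by
      refine ⟨Nat.find hjex, Nat.find_spec hjex, ?_⟩
      rcases Nat.eq_zero_or_pos (Nat.find hjex) with h0 | hpos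
      · rw [h0]; simpa using hr1
      · have hmin := Nat.find_min hjex (show Nat.find hjex - 1 < Nat.find hjex by omega)
        push_neg at hmin
        have e : (Nat.find hjex - 1) + 1 = Nat.find hjex := by omega
        rwa [e] at hmin
    have h2jpos : (0:ℝ) < 2 ^ j := by positivity
    have hjm : j ≤ m := by
      by_contra hcon
      push_neg at hcon
      have h1 : (2:ℝ) ^ m < 2 ^ j := by
        exact pow_lt_pow_right₀ (by norm_num) hcon
      have h2 : ((2:ℝ) ^ j)⁻¹ < ((2:ℝ) ^ m)⁻¹ := by
        exact inv_strictAnti₀ h2m h1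
      linarith
    -- the key scale comparison
    have ha : (2:ℝ) ^ m < 2 / δ := by
      rw [lt_div_iff₀ hδ]
      nlinarith [inv_mul_cancel₀ h2m.ne']
    have hb : ((2:ℝ) ^ j)⁻¹ < 2 * r := by
      have h2j1 : ((2:ℝ) ^ (j + 1))⁻¹ = ((2:ℝ) ^ j)⁻¹ * 2⁻¹ := by
        rw [pow_succ, mul_inv]
      rw [h2j1] at hj1
      linarith
    have hmj : (2:ℝ) ^ (m - j) ≤ 4 * (r / δ) := by
      have hmjpow : (2:ℝ) ^ (m - j) * 2 ^ j = 2 ^ m := by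
        rw [← pow_add]; congr 1; omega
      have hc : (2:ℝ) ^ (m - j) = 2 ^ m * ((2:ℝ) ^ j)⁻¹ := by
        rw [← hmjpow, mul_assoc, mul_inv_cancel₀ h2jpos.ne', mul_one]
      calc (2:ℝ) ^ (m - j) = 2 ^ m * ((2:ℝ) ^ j)⁻¹ := hc
        _ ≤ (2 / δ) * (2 * r) := by
            refine mul_le_mul ha.le hb.le (by positivity) (by positivity)
        _ = 4 * (r / δ) := by ring
    set c0 : Fin n → ℤ := fun i => ⌊x i * 2 ^ j⌋ with hc0def
    set O : Finset (Fin n → ℤ) := Fintype.piFinset (fun _ : Fin n => Finset.Icc (-1 : ℤ) 1)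
      with hOdef
    have hOcard : O.card = 3 ^ n := by
      rw [hOdef, Fintype.card_piFinset]
      simp [Int.card_Icc]
    have hcover : (P0.filter (fun x => cls x = σ)).filter (· ∈ closedBall x r) ⊆
        O.biUnion (fun e => (P0.filter (fun x => cls x = σ)).filter
          (· ∈ cube j (fun i => c0 i + e i))) := by
      intro a ha
      rw [Finset.mem_filter] at ha
      obtain ⟨haP, haB⟩ := ha
      have hacube : a ∈ cube j (fun i => ⌊a i * 2 ^ j⌋) := mem_cube_floor j a
      refine Finset.mem_biUnion.2 ⟨fun i => ⌊a i * 2 ^ j⌋ - c0 i, ?_, ?_⟩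
      · refine Fintype.mem_piFinset.2 fun i => Finset.mem_Icc.2 ⟨?_, ?_⟩
        all_goals {
          have hdist : |a i - x i| ≤ r :=
            (coord_le_dist a x i).trans (mem_closedBall.1 haB)
          have hr2j : r * 2 ^ j ≤ 1 := by
            calc r * 2 ^ j ≤ ((2:ℝ) ^ j)⁻¹ * 2 ^ j :=
                  mul_le_mul_of_nonneg_right hj2 h2jpos.le
              _ = 1 := inv_mul_cancel₀ h2jpos.ne'
          have key : |a i * 2 ^ j - x i * 2 ^ j| ≤ 1 := by
            rw [← sub_mul, abs_mul, abs_of_pos h2jpos]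
            calc |a i - x i| * 2 ^ j ≤ r * 2 ^ j :=
                  mul_le_mul_of_nonneg_right hdist h2jpos.le
              _ ≤ 1 := hr2j
          obtain ⟨k1, k2⟩ := abs_le.1 key
          have hfl1 : ⌊a i * 2 ^ j⌋ ≤ ⌊x i * 2 ^ j⌋ + 1 := by
            have := Int.floor_le_floor (R := ℝ) (show a i * 2 ^ j ≤ x i * 2 ^ j + 1 by linarith)
            rwa [Int.floor_add_one] at this
          have hfl2 : ⌊x i * 2 ^ j⌋ - 1 ≤ ⌊a i * 2 ^ j⌋ := by
            have h := Int.floor_le_floor (R := ℝ)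
              (show x i * 2 ^ j - ((1:ℤ):ℝ) ≤ a i * 2 ^ j by push_cast; linarith)
            rwa [Int.floor_sub_intCast] at h
          simp only [hc0def]
          omega
        }
      · rw [Finset.mem_filter]
        refine ⟨haP, ?_⟩
        have e : (fun i => c0 i + (⌊a i * 2 ^ j⌋ - c0 i)) = fun i => ⌊a i * 2 ^ j⌋ := by
          funext i; ring
        rw [e]
        exact hacube
    have hcap2 : ∀ e ∈ O, (((P0.filter (fun x => cls x = σ)).filter
        (· ∈ cube j (fun i => c0 i + e i))).card : ℝ) ≤ 2 * (4:ℝ) ^ s * (r / δ) ^ s := by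
      intro e _
      have hsubP : (P0.filter (fun x => cls x = σ)).filter (· ∈ cube j (fun i => c0 i + e i)) ⊆
          P0.filter (· ∈ cube j (fun i => c0 i + e i)) :=
        Finset.filter_subset_filter _ (Finset.filter_subset _ _)
      have hcount := hP0count (m - j) (by omega) (fun i => c0 i + e i)
      have harj : m - (m - j) = j := by omega
      rw [harj] at hcount
      have hcard : ((P0.filter (fun x => cls x = σ)).filter
          (· ∈ cube j (fun i => c0 i + e i))).card ≤ cap B s m (m - j) (fun i => c0 i + e i) :=
        (Finset.card_le_card hsubP).trans hcount
      have hone : (1:ℝ) ≤ ((2:ℝ) ^ (m - j)) ^ s := by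
        rw [show (1:ℝ) = (1:ℝ) ^ s from (Real.one_rpow s).symm]
        exact Real.rpow_le_rpow zero_le_one (one_le_pow₀ (by norm_num)) hs.le
      have hrpow : ((2:ℝ) ^ (m - j)) ^ s ≤ (4 * (r / δ)) ^ s :=
        Real.rpow_le_rpow (by positivity) hmj hs.le
      have hmul : (4 * (r / δ)) ^ s = (4:ℝ) ^ s * (r / δ) ^ s :=
        Real.mul_rpow (by norm_num) (by positivity)
      have hcapreal := cap_le (B := B) (m := m) hs (m - j) (fun i => c0 i + e i)
      calc (((P0.filter (fun x => cls x = σ)).filter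
            (· ∈ cube j (fun i => c0 i + e i))).card : ℝ)
          ≤ (cap B s m (m - j) (fun i => c0 i + e i) : ℝ) := by exact_mod_cast hcard
        _ ≤ ((2:ℝ) ^ (m - j)) ^ s + 1 := hcapreal
        _ ≤ 2 * ((2:ℝ) ^ (m - j)) ^ s := by linarith
        _ ≤ 2 * ((4:ℝ) ^ s * (r / δ) ^ s) := by
            rw [← hmul]; exact mul_le_mul_of_nonneg_left hrpow (by norm_num)
        _ = 2 * (4:ℝ) ^ s * (r / δ) ^ s := by ring
    have hset : ((↑(P0.filter (fun x => cls x = σ)) : Set (EuclideanSpace ℝ (Fin n)))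
        ∩ closedBall x r) =
        ↑((P0.filter (fun x => cls x = σ)).filter (· ∈ closedBall x r)) := by
      ext a
      simp only [Set.mem_inter_iff, Finset.coe_filter, Set.mem_setOf_eq, Finset.mem_coe,
        Finset.mem_filter]
    rw [hset, Set.ncard_coe_finset]
    have h1 : ((P0.filter (fun x => cls x = σ)).filter (· ∈ closedBall x r)).card ≤
        ∑ e ∈ O, ((P0.filter (fun x => cls x = σ)).filter
          (· ∈ cube j (fun i => c0 i + e i))).card :=
      (Finset.card_le_card hcover).trans Finset.card_biUnion_le
    calc (((P0.filter (fun x => cls x = σ)).filter (· ∈ closedBall x r)).card : ℝ)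
        ≤ ∑ e ∈ O, (((P0.filter (fun x => cls x = σ)).filter
            (· ∈ cube j (fun i => c0 i + e i))).card : ℝ) := by exact_mod_cast h1
      _ ≤ ∑ _e ∈ O, 2 * (4:ℝ) ^ s * (r / δ) ^ s := Finset.sum_le_sum hcap2
      _ = (O.card : ℝ) * (2 * (4:ℝ) ^ s * (r / δ) ^ s) := by
          rw [Finset.sum_const, nsmul_eq_mul]
      _ = (3:ℝ) ^ n * (2 * (4:ℝ) ^ s) * (r / δ) ^ s := by
          rw [hOcard]; push_cast; ring
end
end
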